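/- arXiv:2501.09331 — 2 statements merged into one kernel-verified Lean document; each statement's English description precedes it below -/
import Mathlib

section
/- Let L and K be natural numbers with 1 ≤ K ≤ L, and let M ⊆ Fin L be a set of exactly K 'mismatch' positions. For a uniformly random permutation σ of Fin L, let T(σ) be the least i ≥ 1 with σ(i−1) ∈ M. Then for every i with 1 ≤ i ≤ L−K, P(T = i) = ((L−K)!/L!) · ( (L−i+1)!/(L−K−i+1)! − (L−i)!/(L−K−i)! ). -/
open Finset
open scoped Classical

/-- The number of comparisons until falsification: the least `i ≥ 1` such that the
`(i-1)`-th compared position `σ (i-1)` is a mismatch position (a member of `M`). -/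
noncomputable def falsificationTime {L : ℕ} (M : Finset (Fin L)) (σ : Equiv.Perm (Fin L)) : ℕ :=
  sInf {i : ℕ | 1 ≤ i ∧ ∃ h : i - 1 < L, σ ⟨i - 1, h⟩ ∈ M}

lemma subtypeCongr_apply_of_mem {α : Type*} {p q : α → Prop} [DecidablePred p] [DecidablePred q]
    (e1 : { x // p x } ≃ { x // q x }) (e2 : { x // ¬p x } ≃ { x // ¬q x }) (x) (hx : p x) :
    Equiv.subtypeCongr e1 e2 x = e1 ⟨x, hx⟩ := by
  simp only [Equiv.subtypeCongr, Equiv.trans_apply, Equiv.sumCongr_apply]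
  rw [Equiv.sumCompl_symm_apply_of_pos hx, Sum.map_inl, Equiv.sumCompl_apply_inl]

lemma subtypeCongr_apply_of_not_mem {α : Type*} {p q : α → Prop} [DecidablePred p] [DecidablePred q]
    (e1 : { x // p x } ≃ { x // q x }) (e2 : { x // ¬p x } ≃ { x // ¬q x }) (x) (hx : ¬p x) :
    Equiv.subtypeCongr e1 e2 x = e2 ⟨x, hx⟩ := by
  simp only [Equiv.subtypeCongr, Equiv.trans_apply, Equiv.sumCongr_apply]
  rw [Equiv.sumCompl_symm_apply_of_neg hx, Sum.map_inr, Equiv.sumCompl_apply_inr]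

noncomputable def fiberEquiv {L i : ℕ} (hiL : i ≤ L) (f : Fin i ↪ Fin L) :
    {σ : Equiv.Perm (Fin L) // ∀ j : Fin i, σ (Fin.castLE hiL j) = f j} ≃
      ({x : Fin L // ¬ x ∈ Set.range (Fin.castLE hiL)} ≃ {y : Fin L // ¬ y ∈ Set.range f}) := by
  have hinc : Function.Injective (Fin.castLE hiL) := Fin.castLE_injective hiL
  set e1 : {x : Fin L // x ∈ Set.range (Fin.castLE hiL)} ≃ {y : Fin L // y ∈ Set.range f} :=
    (Equiv.ofInjective _ hinc).symm.trans (Equiv.ofInjective f f.injective) with he1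
  have he1app : ∀ (j : Fin i) (h), e1 ⟨Fin.castLE hiL j, h⟩ = ⟨f j, ⟨j, rfl⟩⟩ := by
    intro j h
    rw [he1, Equiv.trans_apply]
    have : (⟨Fin.castLE hiL j, h⟩ : {x : Fin L // x ∈ Set.range (Fin.castLE hiL)})
        = Equiv.ofInjective _ hinc j := rfl
    rw [this, Equiv.symm_apply_apply, Equiv.ofInjective_apply]
  refine ⟨fun σ => σ.1.subtypeEquiv (fun a => not_congr ?_),
    fun e => ⟨Equiv.subtypeCongr e1 e, fun j => ?_⟩, ?_, ?_⟩
  · constructor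
    · rintro ⟨j, rfl⟩; exact ⟨j, (σ.2 j).symm⟩
    · rintro ⟨j, hj⟩
      exact ⟨j, σ.1.injective (by rw [σ.2 j, hj])⟩
  · rw [subtypeCongr_apply_of_mem e1 e _ (Set.mem_range_self j), he1app]
  · intro σ
    ext x
    by_cases hx : x ∈ Set.range (Fin.castLE hiL)
    · obtain ⟨j, rfl⟩ := hx
      rw [subtypeCongr_apply_of_mem e1 _ _ (Set.mem_range_self j), he1app, σ.2 j]
    · rw [subtypeCongr_apply_of_not_mem e1 _ _ hx]
      rfl
  · intro e
    ext x
    have hx := x.2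
    rw [Equiv.subtypeEquiv_apply]
    simp only []
    congr 1
    rw [subtypeCongr_apply_of_not_mem e1 _ _ x.2]

lemma fiber_card {L i : ℕ} (hiL : i ≤ L) (f : Fin i ↪ Fin L) :
    (Finset.univ.filter (fun σ : Equiv.Perm (Fin L) =>
      ∀ j : Fin i, σ (Fin.castLE hiL j) = f j)).card = Nat.factorial (L - i) := by
  have hinc : Function.Injective (Fin.castLE hiL) := Fin.castLE_injective hiL
  have hc1 : Fintype.card {x : Fin L // ¬ x ∈ Set.range (Fin.castLE hiL)} = L - i := by
    rw [Fintype.card_subtype_compl, Fintype.card_fin]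
    have : Fintype.card {x : Fin L // x ∈ Set.range (Fin.castLE hiL)} = i := by
      rw [Fintype.card_congr (Equiv.ofInjective _ hinc).symm, Fintype.card_fin]
    omega
  have hc2 : Fintype.card {y : Fin L // ¬ y ∈ Set.range f} = L - i := by
    rw [Fintype.card_subtype_compl, Fintype.card_fin]
    have : Fintype.card {y : Fin L // y ∈ Set.range f} = i := by
      rw [Fintype.card_congr (Equiv.ofInjective f f.injective).symm, Fintype.card_fin]
    omega
  rw [← Fintype.card_subtype]
  rw [Fintype.card_congr (fiberEquiv hiL f),
    Fintype.card_equiv (Fintype.equivOfCardEq (hc1.trans hc2.symm)), hc1]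

lemma ft_eq_iff {L : ℕ} (M : Finset (Fin L)) (σ : Equiv.Perm (Fin L)) {i : ℕ}
    (hi1 : 1 ≤ i) (hiL : i ≤ L) (hii : i - 1 < i) :
    falsificationTime M σ = i ↔
      ((∀ j : Fin i, (j : ℕ) < i - 1 → σ (Fin.castLE hiL j) ∉ M) ∧
        σ (Fin.castLE hiL ⟨i - 1, hii⟩) ∈ M) := by
  have hL : i - 1 < L := by omega
  set S : Set ℕ := {n : ℕ | 1 ≤ n ∧ ∃ h : n - 1 < L, σ ⟨n - 1, h⟩ ∈ M} with hS
  constructor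
  · intro h
    have hne : S.Nonempty := by
      rcases Set.eq_empty_or_nonempty S with he | he
      · exfalso
        have : falsificationTime M σ = 0 := by
          rw [falsificationTime, ← hS, he, Nat.sInf_empty]
        omega
      · exact he
    have hiS : i ∈ S := by rw [← h]; exact Nat.sInf_mem hne
    refine ⟨?_, ?_⟩
    · intro j hj hmem
      have hns : ((j : ℕ) + 1) ∉ S :=
        Nat.notMem_of_lt_sInf (by rw [falsificationTime, ← hS] at h; omega)
      refine hns ⟨by omega, by omega, ?_⟩
      have : (⟨(j : ℕ) + 1 - 1, by omega⟩ : Fin L) = Fin.castLE hiL j := by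
        apply Fin.ext; simp
      rw [this]; exact hmem
    · obtain ⟨-, hlt, hm⟩ := hiS
      exact hm
  · rintro ⟨h1, h2⟩
    have hiS : i ∈ S := ⟨hi1, hL, h2⟩
    have hle : sInf S ≤ i := Nat.sInf_le hiS
    rw [falsificationTime, ← hS]
    by_contra hne
    have hlt : sInf S < i := lt_of_le_of_ne hle hne
    obtain ⟨h1', hlt', hm'⟩ := Nat.sInf_mem (⟨i, hiS⟩ : S.Nonempty)
    exact h1 ⟨sInf S - 1, by omega⟩ (show sInf S - 1 < i - 1 by omega) hm'

lemma S_card {L K i : ℕ} (hKL : K ≤ L) (M : Finset (Fin L)) (hM : M.card = K)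
    (hii : i - 1 < i) :
    (Finset.univ.filter (fun f : Fin i ↪ Fin L =>
        (∀ j : Fin i, (j : ℕ) < i - 1 → f j ∉ M) ∧ f ⟨i - 1, hii⟩ ∈ M)).card
      = (L - K).descFactorial (i - 1) * K := by
  have E : {f : Fin i ↪ Fin L // (∀ j : Fin i, (j : ℕ) < i - 1 → f j ∉ M) ∧ f ⟨i - 1, hii⟩ ∈ M}
      ≃ (Fin (i - 1) ↪ {x : Fin L // x ∉ M}) × {x : Fin L // x ∈ M} := by
    refine ⟨fun f => (⟨fun j => ⟨f.1 ⟨(j : ℕ), by omega⟩, f.2.1 ⟨(j : ℕ), by omega⟩ j.2⟩, ?_⟩,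
        ⟨f.1 ⟨i - 1, hii⟩, f.2.2⟩),
      fun gm => ⟨⟨fun j => if h : (j : ℕ) < i - 1 then (gm.1 ⟨(j : ℕ), h⟩ : Fin L)
        else (gm.2 : Fin L), ?_⟩, ?_, ?_⟩, ?_, ?_⟩
    · intro a b hab
      simp only [Subtype.mk.injEq] at hab
      have := f.1.injective hab
      simpa [Fin.ext_iff] using congrArg Fin.val this
    · intro a b hab
      dsimp at hab
      split_ifs at hab with ha hb hb
      · have := gm.1.injective (Subtype.ext hab)
        simpa [Fin.ext_iff] using congrArg Fin.val this
      · exact absurd (hab ▸ (gm.1 ⟨(a : ℕ), ha⟩).2) (not_not_intro gm.2.2)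
      · exact absurd (hab ▸ (gm.1 ⟨(b : ℕ), hb⟩).2) (not_not_intro gm.2.2)
      · exact Fin.ext (by omega)
    · intro j hj
      change (if h : (j : ℕ) < i - 1 then ((gm.1 ⟨(j : ℕ), h⟩ : {x : Fin L // x ∉ M}) : Fin L) else (gm.2 : Fin L)) ∉ M
      simp only [Function.Embedding.coeFn_mk, dif_pos hj]
      exact (gm.1 ⟨(j : ℕ), hj⟩).2
    · change (if h : i - 1 < i - 1 then ((gm.1 ⟨i - 1, h⟩ : {x : Fin L // x ∉ M}) : Fin L) else (gm.2 : Fin L)) ∈ M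
      simp only [Function.Embedding.coeFn_mk, dif_neg (lt_irrefl (i - 1))]
      exact gm.2.2
    · rintro ⟨f, hf⟩
      apply Subtype.ext
      apply DFunLike.ext
      intro j
      simp only [Function.Embedding.coeFn_mk]
      split_ifs with h
      · exact congrArg f (Fin.ext rfl)
      · exact congrArg f (Fin.ext (show i - 1 = (j : ℕ) by have := j.isLt; omega))
    · rintro ⟨g, m⟩
      refine Prod.ext ?_ ?_
      · apply DFunLike.ext
        intro j
        apply Subtype.ext
        simp only [Function.Embedding.coeFn_mk, dif_pos j.2]
      · apply Subtype.ext
        simp only [Function.Embedding.coeFn_mk, dif_neg (lt_irrefl (i - 1))]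
  have hcM : Fintype.card {x : Fin L // x ∈ M} = K := by
    simpa using hM
  have hcMc : Fintype.card {x : Fin L // x ∉ M} = L - K := by
    rw [Fintype.card_subtype_compl, hcM, Fintype.card_fin]
  rw [← Fintype.card_subtype, Fintype.card_congr E, Fintype.card_prod,
    Fintype.card_embedding_eq, hcM, hcMc, Fintype.card_fin]

lemma event_card {L K i : ℕ} (hK1 : 1 ≤ K) (hKL : K ≤ L) (M : Finset (Fin L)) (hM : M.card = K)
    (hi1 : 1 ≤ i) (hi : i ≤ L - K) :
    (Finset.univ.filter (fun σ : Equiv.Perm (Fin L) => falsificationTime M σ = i)).card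
      = (L - K).descFactorial (i - 1) * K * Nat.factorial (L - i) := by
  have hiL : i ≤ L := by omega
  have hii : i - 1 < i := by omega
  set Q : (Fin i ↪ Fin L) → Prop := fun f =>
    (∀ j : Fin i, (j : ℕ) < i - 1 → f j ∉ M) ∧ f ⟨i - 1, hii⟩ ∈ M with hQ
  set R : Equiv.Perm (Fin L) → (Fin i ↪ Fin L) := fun σ =>
    ⟨fun j => σ (Fin.castLE hiL j), fun a b hab =>
      Fin.castLE_injective hiL (σ.injective hab)⟩ with hR
  have hiff : ∀ σ : Equiv.Perm (Fin L), falsificationTime M σ = i ↔ Q (R σ) :=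
    fun σ => ft_eq_iff M σ hi1 hiL hii
  have hmaps : ∀ σ ∈ Finset.univ.filter (fun σ : Equiv.Perm (Fin L) => falsificationTime M σ = i),
      R σ ∈ Finset.univ.filter Q := by
    intro σ hσ
    simp only [mem_filter, mem_univ, true_and] at hσ ⊢
    exact (hiff σ).1 hσ
  rw [Finset.card_eq_sum_card_fiberwise hmaps]
  have hfib : ∀ f ∈ Finset.univ.filter Q,
      ((Finset.univ.filter (fun σ : Equiv.Perm (Fin L) => falsificationTime M σ = i)).filter
        (fun σ => R σ = f)).card = Nat.factorial (L - i) := by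
    intro f hf
    simp only [mem_filter, mem_univ, true_and] at hf
    rw [← fiber_card hiL f]
    congr 1
    ext σ
    simp only [mem_filter, mem_univ, true_and]
    constructor
    · rintro ⟨-, rfl⟩
      intro j; rfl
    · intro h
      have hRf : R σ = f := by
        apply DFunLike.ext
        intro j
        exact h j
      exact ⟨(hiff σ).2 (hRf ▸ hf), hRf⟩
  rw [Finset.sum_congr rfl hfib, Finset.sum_const, smul_eq_mul, S_card hKL M hM hii]

theorem stmt_1 (L K : ℕ) (hK1 : 1 ≤ K) (hKL : K ≤ L)
    (M : Finset (Fin L)) (hM : M.card = K)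
    (i : ℕ) (hi1 : 1 ≤ i) (hi : i ≤ L - K) :
    ((Finset.univ.filter (fun σ : Equiv.Perm (Fin L) =>
        falsificationTime M σ = i)).card : ℝ) / (Nat.factorial L : ℝ)
      = ((Nat.factorial (L - K) : ℝ) / (Nat.factorial L : ℝ))
        * ((Nat.factorial (L - i + 1) : ℝ) / (Nat.factorial (L - K - i + 1) : ℝ)
          - (Nat.factorial (L - i) : ℝ) / (Nat.factorial (L - K - i) : ℝ)) := by
  rw [event_card hK1 hKL M hM hi1 hi]
  have hd : Nat.factorial ((L - K) - (i - 1)) * (L - K).descFactorial (i - 1)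
      = Nat.factorial (L - K) := Nat.factorial_mul_descFactorial (by omega)
  have he1 : (L - K) - (i - 1) = L - K - i + 1 := by omega
  have he2 : L - i + 1 = (L - K - i + 1) + K := by omega
  rw [he1] at hd
  have f1 : (Nat.factorial (L - i + 1) : ℝ)
      = (((L - K - i + 1 : ℕ) : ℝ) + (K : ℝ)) * (Nat.factorial (L - i) : ℝ) := by
    rw [Nat.factorial_succ, Nat.cast_mul]
    congr 1
    exact_mod_cast congrArg (Nat.cast : ℕ → ℝ) he2
  have f2 : (Nat.factorial (L - K - i + 1) : ℝ)
      = ((L - K - i + 1 : ℕ) : ℝ) * (Nat.factorial (L - K - i) : ℝ) := by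
    rw [Nat.factorial_succ, Nat.cast_mul]
  have f3 : (Nat.factorial (L - K) : ℝ)
      = (Nat.factorial (L - K - i + 1) : ℝ) * (((L - K).descFactorial (i - 1) : ℕ) : ℝ) := by
    rw [← hd, Nat.cast_mul]
  have hLHS : (((L - K).descFactorial (i - 1) * K * Nat.factorial (L - i) : ℕ) : ℝ)
      = (((L - K).descFactorial (i - 1) : ℕ) : ℝ) * (K : ℝ) * (Nat.factorial (L - i) : ℝ) := by
    push_cast; ring
  have hx : ((L - K - i + 1 : ℕ) : ℝ) ≠ 0 := by
    have : 0 < L - K - i + 1 := by omega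
    exact_mod_cast this.ne'
  have hF2 : (Nat.factorial (L - K - i) : ℝ) ≠ 0 := by
    exact_mod_cast Nat.factorial_ne_zero _
  have hFL : (Nat.factorial L : ℝ) ≠ 0 := by
    exact_mod_cast Nat.factorial_ne_zero _
  rw [hLHS, f3, f1, f2]
  set D := (((L - K).descFactorial (i - 1) : ℕ) : ℝ) with hD
  set x := ((L - K - i + 1 : ℕ) : ℝ) with hxd
  set F1 := (Nat.factorial (L - i) : ℝ) with hF1d
  set F2 := (Nat.factorial (L - K - i) : ℝ) with hF2d
  set FL := (Nat.factorial L : ℝ) with hFLd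
  clear_value D x F1 F2 FL
  field_simp
  ring
end

section
/- Let L ≥ 1 be a natural number and let p, q ∈ [0,1] with p ≠ q. For each bit string θ : Fin L → Bool, let μ_θ be the product probability measure on ℕ → Bool (with the product σ-algebra) whose n-th coordinate is Bernoulli with success probability p if θ(n mod L) = true and q otherwise. Then there exists a measurable function D : (ℕ → Bool) → (Fin L → Bool) such that for every θ : Fin L → Bool, μ_θ{ ω : D(ω) = θ } = 1. That is, the finite information of θ, spread over the infinite observation sequence by encoding each bit of θ as a distinct Bernoulli distribution used cyclically, is almost surely recoverable from the observations. -/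
open MeasureTheory Filter ProbabilityTheory Topology

private lemma cylMeas' (s : Finset ℕ) (f : ℕ → Bool) :
    MeasurableSet {ω : ℕ → Bool | ∀ i ∈ s, ω i = f i} := by
  have : {ω : ℕ → Bool | ∀ i ∈ s, ω i = f i} = ⋂ i ∈ s, (fun ω : ℕ → Bool => ω i) ⁻¹' {f i} := by
    ext ω; simp
  rw [this]
  exact MeasurableSet.biInter s.countable_toSet
    (fun i _ => (measurable_pi_apply i) (measurableSet_singleton _))

/-- The finite-dimensional law on an arbitrary finite set of coordinates. -/
private lemma auxCyl' (μ : Measure (ℕ → Bool)) (r : ℕ → ℝ) (hr0 : ∀ i, 0 ≤ r i)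
    (hr1 : ∀ i, r i ≤ 1)
    (hcyl : ∀ (n : ℕ) (b : Fin n → Bool), μ {ω | ∀ i : Fin n, ω i = b i}
      = ∏ i : Fin n, ENNReal.ofReal (if b i then r i else 1 - r i))
    (s : Finset ℕ) (f : ℕ → Bool) :
    μ {ω | ∀ i ∈ s, ω i = f i}
      = ∏ i ∈ s, ENNReal.ofReal (if f i then r i else 1 - r i) := by
  obtain ⟨n, hn⟩ : ∃ n, s ⊆ Finset.range n := ⟨s.sup id + 1, fun i hi =>
    Finset.mem_range.2 (Nat.lt_succ_of_le (Finset.le_sup (f := id) hi))⟩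
  have key : ∀ k (s : Finset ℕ) (f : ℕ → Bool), s ⊆ Finset.range n →
      (Finset.range n \ s).card = k →
      μ {ω | ∀ i ∈ s, ω i = f i}
        = ∏ i ∈ s, ENNReal.ofReal (if f i then r i else 1 - r i) := by
    intro k
    induction k with
    | zero =>
      intro s f hs hcard
      have hs' : s = Finset.range n := by
        have := Finset.card_eq_zero.1 hcard
        have hsub := Finset.sdiff_eq_empty_iff_subset.1 this
        exact le_antisymm hs hsub
      subst hs'
      have hset : {ω : ℕ → Bool | ∀ i ∈ Finset.range n, ω i = f i}
          = {ω | ∀ i : Fin n, ω i = f i} := by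
        ext ω
        simp only [Set.mem_setOf_eq, Finset.mem_range]
        constructor
        · intro h i; exact h i i.isLt
        · intro h i hi; exact h ⟨i, hi⟩
      rw [hset, hcyl n (fun i : Fin n => f i)]
      rw [Finset.prod_range fun i => ENNReal.ofReal (if f i then r i else 1 - r i)]
    | succ k ih =>
      intro s f hs hcard
      obtain ⟨j, hj⟩ : (Finset.range n \ s).Nonempty := by
        rw [← Finset.card_pos, hcard]; exact Nat.succ_pos k
      have hjs : j ∉ s := (Finset.mem_sdiff.1 hj).2
      have hins : ∀ b : Bool, {ω : ℕ → Bool | ∀ i ∈ insert j s, ω i = Function.update f j b i}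
          = {ω : ℕ → Bool | ω j = b ∧ ∀ i ∈ s, ω i = f i} := by
        intro b
        ext ω
        simp only [Set.mem_setOf_eq, Finset.mem_insert]
        constructor
        · intro h
          refine ⟨by simpa using h j (Or.inl rfl), fun i hi => ?_⟩
          have hij : i ≠ j := fun h' => hjs (h' ▸ hi)
          simpa [Function.update_of_ne hij] using h i (Or.inr hi)
        · rintro ⟨h1, h2⟩ i hi
          rcases hi with rfl | hi
          · simpa using h1
          · have hij : i ≠ j := fun h' => hjs (h' ▸ hi)
            simpa [Function.update_of_ne hij] using h2 i hi
      have hsplit : {ω : ℕ → Bool | ∀ i ∈ s, ω i = f i}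
          = {ω : ℕ → Bool | ω j = true ∧ ∀ i ∈ s, ω i = f i}
            ∪ {ω : ℕ → Bool | ω j = false ∧ ∀ i ∈ s, ω i = f i} := by
        ext ω
        simp only [Set.mem_setOf_eq, Set.mem_union]
        constructor
        · intro h; cases hωj : ω j
          · exact Or.inr ⟨rfl, h⟩
          · exact Or.inl ⟨rfl, h⟩
        · rintro (⟨_, h⟩ | ⟨_, h⟩) <;> exact h
      have hdisj : Disjoint {ω : ℕ → Bool | ω j = true ∧ ∀ i ∈ s, ω i = f i}
          {ω : ℕ → Bool | ω j = false ∧ ∀ i ∈ s, ω i = f i} := by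
        rw [Set.disjoint_left]
        rintro ω ⟨h1, _⟩ ⟨h2, _⟩
        simp [h1] at h2
      have hmeas : ∀ b : Bool, MeasurableSet {ω : ℕ → Bool | ω j = b ∧ ∀ i ∈ s, ω i = f i} := by
        intro b
        rw [← hins b]
        exact cylMeas' _ _
      have hcard' : ∀ _ : Bool, (Finset.range n \ insert j s).card = k := by
        intro _
        have : Finset.range n \ insert j s = (Finset.range n \ s).erase j := by
          ext x; simp [Finset.mem_sdiff, Finset.mem_erase, Finset.mem_insert]; tauto
        rw [this, Finset.card_erase_of_mem hj, hcard]
        omega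
      have hsub' : insert j s ⊆ Finset.range n :=
        Finset.insert_subset (Finset.mem_sdiff.1 hj).1 hs
      have hih : ∀ b : Bool, μ {ω : ℕ → Bool | ω j = b ∧ ∀ i ∈ s, ω i = f i}
          = ENNReal.ofReal (if b then r j else 1 - r j)
            * ∏ i ∈ s, ENNReal.ofReal (if f i then r i else 1 - r i) := by
        intro b
        rw [← hins b, ih (insert j s) (Function.update f j b) hsub' (hcard' b),
          Finset.prod_insert hjs, Function.update_self]
        congr 1
        apply Finset.prod_congr rfl
        intro i hi
        have hij : i ≠ j := fun h' => hjs (h' ▸ hi)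
        rw [Function.update_of_ne hij]
      rw [hsplit, measure_union hdisj (hmeas false), hih true, hih false,
        ← add_mul]
      have hone : ENNReal.ofReal (if (true : Bool) = true then r j else 1 - r j)
          + ENNReal.ofReal (if (false : Bool) = true then r j else 1 - r j) = 1 := by
        simp only [if_true, show ((false : Bool) = true) = False by simp, if_false]
        rw [← ENNReal.ofReal_add (hr0 j) (by linarith [hr1 j])]
        simp
      rw [hone, one_mul]
  exact key _ s f hn rfl

private lemma boolSetCases' (S : Set Bool) : S = ∅ ∨ S = {true} ∨ S = {false} ∨ S = Set.univ := by
  by_cases ht : true ∈ S <;> by_cases hf : false ∈ S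
  · right; right; right; ext b; cases b <;> simp [ht, hf]
  · right; left; ext b; cases b <;> simp [ht, hf]
  · right; right; left; ext b; cases b <;> simp [ht, hf]
  · left; ext b; cases b <;> simp [ht, hf]

private lemma coordIndep' (μ : Measure (ℕ → Bool)) [IsProbabilityMeasure μ] (r : ℕ → ℝ)
    (hfin : ∀ (s : Finset ℕ) (f : ℕ → Bool), μ {ω | ∀ i ∈ s, ω i = f i}
      = ∏ i ∈ s, ENNReal.ofReal (if f i then r i else 1 - r i))
    (i i' : ℕ) (hne : i ≠ i') :
    IndepFun (fun ω : ℕ → Bool => ω i) (fun ω : ℕ → Bool => ω i') μ := by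
  have hone : ∀ (j : ℕ) (c : Bool), μ {ω | ω j = c}
      = ENNReal.ofReal (if c then r j else 1 - r j) := by
    intro j c; simpa using hfin {j} (fun _ => c)
  have hpair : ∀ c c' : Bool, μ {ω | ω i = c ∧ ω i' = c'}
      = μ {ω | ω i = c} * μ {ω | ω i' = c'} := by
    intro c c'
    have hf := hfin {i, i'} (fun k => if k = i then c else c')
    have hset : {ω : ℕ → Bool | ∀ k ∈ ({i, i'} : Finset ℕ), ω k = if k = i then c else c'}
        = {ω | ω i = c ∧ ω i' = c'} := by
      ext ω
      simp only [Set.mem_setOf_eq, Finset.mem_insert, Finset.mem_singleton]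
      constructor
      · intro h
        refine ⟨by simpa using h i (Or.inl rfl), ?_⟩
        have := h i' (Or.inr rfl)
        simpa [hne.symm] using this
      · rintro ⟨h1, h2⟩ k hk
        rcases hk with rfl | rfl
        · simpa using h1
        · simpa [hne.symm] using h2
    rw [hset, Finset.prod_pair hne] at hf
    rw [hf, hone i c, hone i' c']
    simp [hne.symm]
  rw [ProbabilityTheory.indepFun_iff_measure_inter_preimage_eq_mul]
  intro S T _ _
  have hpre : ∀ (j : ℕ) (c : Bool),
      (fun ω : ℕ → Bool => ω j) ⁻¹' {c} = {ω | ω j = c} := by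
    intro j c; ext ω; simp [Set.mem_preimage]
  have hpre2 : ∀ (c c' : Bool),
      (fun ω : ℕ → Bool => ω i) ⁻¹' {c} ∩ (fun ω : ℕ → Bool => ω i') ⁻¹' {c'}
        = {ω | ω i = c ∧ ω i' = c'} := by
    intro c c'; ext ω; simp [Set.mem_preimage, Set.mem_inter_iff]
  have hinter : ∀ c c' : Bool, ({ω : ℕ → Bool | ω i = c} ∩ {ω | ω i' = c'})
      = {ω | ω i = c ∧ ω i' = c'} := fun c c' => rfl
  rcases boolSetCases' S with rfl | rfl | rfl | rfl <;>
      rcases boolSetCases' T with rfl | rfl | rfl | rfl <;>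
    simp only [hpre, hpre2, hinter, hpair, Set.preimage_empty, Set.preimage_univ,
      Set.empty_inter, Set.inter_empty, Set.univ_inter, Set.inter_univ,
      measure_empty, measure_univ, zero_mul, mul_zero, one_mul, mul_one]

private lemma coordIdent' (μ : Measure (ℕ → Bool)) [IsProbabilityMeasure μ] (r : ℕ → ℝ)
    (hone : ∀ (j : ℕ) (c : Bool), μ {ω | ω j = c}
      = ENNReal.ofReal (if c then r j else 1 - r j))
    (i i' : ℕ) (hr : r i = r i') :
    IdentDistrib (fun ω : ℕ → Bool => ω i) (fun ω : ℕ → Bool => ω i') μ μ := by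
  refine ⟨(measurable_pi_apply i).aemeasurable, (measurable_pi_apply i').aemeasurable, ?_⟩
  ext S hS
  rw [Measure.map_apply (measurable_pi_apply i) hS,
    Measure.map_apply (measurable_pi_apply i') hS]
  have hpre : ∀ (j : ℕ) (c : Bool), (fun ω : ℕ → Bool => ω j) ⁻¹' {c} = {ω | ω j = c} := by
    intro j c; ext ω; simp
  rcases boolSetCases' S with rfl | rfl | rfl | rfl <;>
    simp only [hpre, hone, hr, Set.preimage_empty, Set.preimage_univ]

theorem stmt_8 (L : ℕ) (hL : 1 ≤ L) (p q : ℝ)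
    (hp0 : 0 ≤ p) (hp1 : p ≤ 1) (hq0 : 0 ≤ q) (hq1 : q ≤ 1) (hpq : p ≠ q)
    (μ : (Fin L → Bool) → Measure (ℕ → Bool))
    [∀ θ, IsProbabilityMeasure (μ θ)]
    -- μ θ is the product measure whose n-th coordinate is an independent Bernoulli
    -- with success probability p if θ (n mod L) = true and q otherwise:
    -- every finite cylinder has the corresponding product probability.
    (hcyl : ∀ (θ : Fin L → Bool) (n : ℕ) (b : Fin n → Bool),
      μ θ {ω | ∀ i : Fin n, ω i = b i}
        = ∏ i : Fin n,
            ENNReal.ofReal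
              (if b i
                then (if θ ⟨(i : ℕ) % L, Nat.mod_lt _ hL⟩ then p else q)
                else 1 - (if θ ⟨(i : ℕ) % L, Nat.mod_lt _ hL⟩ then p else q))) :
    ∃ D : (ℕ → Bool) → (Fin L → Bool), Measurable D ∧
      ∀ θ : Fin L → Bool, μ θ {ω | D ω = θ} = 1 := by
  classical
  -- the per-coordinate success probability
  set r : (Fin L → Bool) → ℕ → ℝ :=
    fun θ i => if θ ⟨i % L, Nat.mod_lt _ hL⟩ then p else q with hr
  have hr0 : ∀ θ i, 0 ≤ r θ i := by intro θ i; rw [hr]; dsimp; split <;> assumption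
  have hr1 : ∀ θ i, r θ i ≤ 1 := by intro θ i; rw [hr]; dsimp; split <;> assumption
  -- the averaging functions
  set A : ℕ → (ℕ → Bool) → Fin L → ℝ := fun n ω j =>
    (∑ k ∈ Finset.range n, (if ω ((j : ℕ) + k * L) then (1:ℝ) else 0)) / (n : ℝ) with hA
  -- the decoder
  set D : (ℕ → Bool) → Fin L → Bool := fun ω j =>
    if Tendsto (fun n : ℕ => A n ω j) atTop (𝓝 p) then true else false with hD
  refine ⟨D, ?_, ?_⟩
  · rw [measurable_pi_iff]
    intro j
    have hmA : ∀ n : ℕ, Measurable (fun ω => A n ω j) := by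
      intro n
      apply Measurable.div_const
      apply Finset.measurable_sum
      intro k _
      exact (measurable_of_countable (fun b : Bool => if b then (1:ℝ) else 0)).comp
        (measurable_pi_apply ((j : ℕ) + k * L))
    exact Measurable.ite (measurableSet_tendsto (𝓝 p) hmA) measurable_const measurable_const
  · intro θ
    have hfin : ∀ (s : Finset ℕ) (f : ℕ → Bool), μ θ {ω | ∀ i ∈ s, ω i = f i}
        = ∏ i ∈ s, ENNReal.ofReal (if f i then r θ i else 1 - r θ i) :=
      auxCyl' (μ θ) (r θ) (hr0 θ) (hr1 θ) (fun n b => hcyl θ n b)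
    have hone : ∀ (i : ℕ) (c : Bool), μ θ {ω | ω i = c}
        = ENNReal.ofReal (if c then r θ i else 1 - r θ i) := by
      intro i c; simpa using hfin {i} (fun _ => c)
    have hmod : ∀ (j : Fin L) (k : ℕ), r θ ((j : ℕ) + k * L) = r θ (j : ℕ) := by
      intro j k
      rw [hr]
      simp only [Nat.add_mul_mod_self_right]
    -- per-coordinate strong law
    have hae : ∀ j : Fin L, ∀ᵐ ω ∂μ θ, D ω j = θ j := by
      intro j
      set X : ℕ → (ℕ → Bool) → ℝ :=
        fun k ω => if ω ((j : ℕ) + k * L) then (1:ℝ) else 0 with hX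
      have hXmeas : ∀ k, Measurable (X k) := fun k =>
        (measurable_of_countable (fun b : Bool => if b then (1:ℝ) else 0)).comp
          (measurable_pi_apply ((j : ℕ) + k * L))
      have hint : Integrable (X 0) (μ θ) := by
        refine (integrable_const (1:ℝ)).mono' (hXmeas 0).aestronglyMeasurable ?_
        refine Filter.Eventually.of_forall fun ω => ?_
        rw [hX]; dsimp; split <;> simp
      have hu : Measurable (fun b : Bool => if b then (1:ℝ) else 0) :=
        measurable_of_countable _
      have hindep : Pairwise (Function.onFun (IndepFun · · (μ θ)) X) := by
        intro k l hkl
        have hne : (j : ℕ) + k * L ≠ (j : ℕ) + l * L := by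
          intro h
          exact hkl (Nat.eq_of_mul_eq_mul_right hL (by omega))
        exact (coordIndep' (μ θ) (r θ) hfin _ _ hne).comp hu hu
      have hident : ∀ k, IdentDistrib (X k) (X 0) (μ θ) (μ θ) := by
        intro k
        have := (coordIdent' (μ θ) (r θ) hone ((j : ℕ) + k * L) ((j : ℕ) + 0 * L)
          (by rw [hmod j k, hmod j 0])).comp hu
        exact this
      have hSLLN := strong_law_ae_real X hint hindep hident
      have hE : (μ θ)[X 0] = r θ (j : ℕ) := by
        have hXind : X 0 = Set.indicator {ω : ℕ → Bool | ω ((j : ℕ) + 0 * L) = true}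
            (fun _ => (1:ℝ)) := by
          funext ω
          rw [hX]
          by_cases h : ω ((j : ℕ) + 0 * L) = true <;> simp [h, Set.indicator]
        have hms : MeasurableSet {ω : ℕ → Bool | ω ((j : ℕ) + 0 * L) = true} := by
          have h1 : {ω : ℕ → Bool | ω ((j : ℕ) + 0 * L) = true}
              = (fun ω : ℕ → Bool => ω ((j : ℕ) + 0 * L)) ⁻¹' {true} := by ext ω; simp
          rw [h1]
          exact (measurable_pi_apply ((j : ℕ) + 0 * L)) (measurableSet_singleton true)
        rw [hXind, integral_indicator_const (1:ℝ) hms, measureReal_def, hone, smul_eq_mul, mul_one]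
        rw [show (if true then r θ ((j:ℕ) + 0 * L) else 1 - r θ ((j:ℕ) + 0 * L))
            = r θ ((j:ℕ) + 0 * L) from rfl]
        rw [ENNReal.toReal_ofReal (hr0 θ _), hmod j 0]
      rw [hE] at hSLLN
      filter_upwards [hSLLN] with ω hω
      have hωA : Tendsto (fun n : ℕ => A n ω j) atTop (𝓝 (r θ (j : ℕ))) := hω
      by_cases hθ : θ j = true
      · have hrp : r θ (j : ℕ) = p := by
          rw [hr]
          simp only [Nat.mod_eq_of_lt j.isLt, Fin.eta, hθ, if_true]
        have hωp : Tendsto (fun n : ℕ => A n ω j) atTop (𝓝 p) := by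
          rw [← hrp]; exact hωA
        rw [hD]
        simp only [if_pos hωp, hθ]
      · have hθ' : θ j = false := by simp at hθ; exact hθ
        have hrq : r θ (j : ℕ) = q := by
          rw [hr]
          simp only [Nat.mod_eq_of_lt j.isLt, Fin.eta, hθ', if_false]
          simp
        rw [hD]
        have hωq : Tendsto (fun n : ℕ => A n ω j) atTop (𝓝 q) := by
          rw [← hrq]; exact hωA
        have hnot : ¬ Tendsto (fun n : ℕ => A n ω j) atTop (𝓝 p) := by
          intro h
          exact hpq (tendsto_nhds_unique h hωq)
        simp only [if_neg hnot, hθ']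
    have haeAll : ∀ᵐ ω ∂μ θ, D ω = θ := by
      have := (ae_all_iff.2 hae)
      filter_upwards [this] with ω hω
      funext j; exact hω j
    have hDmeas : MeasurableSet {ω | D ω = θ} := by
      have hDm : Measurable D := by
        rw [measurable_pi_iff]
        intro j
        have hmA : ∀ n : ℕ, Measurable (fun ω => A n ω j) := by
          intro n
          apply Measurable.div_const
          apply Finset.measurable_sum
          intro k _
          exact (measurable_of_countable (fun b : Bool => if b then (1:ℝ) else 0)).comp
            (measurable_pi_apply ((j : ℕ) + k * L))
        exact Measurable.ite (measurableSet_tendsto (𝓝 p) hmA) measurable_const measurable_const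
      exact hDm (measurableSet_singleton θ)
    rw [← prob_compl_eq_zero_iff hDmeas]
    have : {ω | D ω = θ}ᶜ = {ω | ¬ D ω = θ} := rfl
    rw [this, ← ae_iff]
    exact haeAll
end
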